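/- Let (α, μ) be a measure space, let w : α → ℝ be measurable with w(x) > 0 for μ-almost every x, and let g : α → ℝ be measurable with x ↦ w(x)^{-1/2} g(x) square-integrable and not almost everywhere zero. Then the function q := w⁻¹ g satisfies: x ↦ w(x)^{1/2} q(x) is square-integrable, ∫ q g dμ = ‖w^{-1/2} g‖²_{L²(μ)}, and ‖w^{1/2} q‖_{L²(μ)} = ‖w^{-1/2} g‖_{L²(μ)}. Consequently, the supremum of (∫ q' g dμ) / ‖w^{1/2} q'‖_{L²(μ)} over all measurable q' with w^{1/2} q' square-integrable and ‖w^{1/2} q'‖_{L²(μ)} ≠ 0 equals ‖w^{-1/2} g‖_{L²(μ)}; in particular the inf-sup constant of the weighted pairing is 1, independently of the measure space and the weight. -/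

import Mathlib

open MeasureTheory
open scoped ENNReal

section Aux

variable {α : Type*} [MeasurableSpace α] {μ : Measure α}

lemma aux_integral_mul_eq {f h : α → ℝ} (hf : MemLp f 2 μ) (hh : MemLp h 2 μ) :
    ∫ x, f x * h x ∂μ = inner (𝕜 := ℝ) (hf.toLp f) (hh.toLp h) := by
  rw [MeasureTheory.L2.inner_def]
  refine integral_congr_ae ?_
  filter_upwards [hf.coeFn_toLp, hh.coeFn_toLp] with x h1 h2
  simp [h1, h2, mul_comm]

end Aux

/-- The weighted inf-sup identity underlying the Brezzi inf-sup condition for the primal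
mixed hydraulic network formulation: on any measure space, with an a.e. positive
measurable weight `w` and measurable `g` with `w^{-1/2} g ∈ L²` not a.e. zero, the
function `q = w⁻¹ g` satisfies `w^{1/2} q ∈ L²`, `∫ q g = ‖w^{-1/2} g‖²`,
`‖w^{1/2} q‖ = ‖w^{-1/2} g‖`, and the supremum of `(∫ q' g) / ‖w^{1/2} q'‖` over all
admissible `q'` is attained and equals `‖w^{-1/2} g‖`. -/
theorem weighted_pairing_infsup
    {α : Type*} [MeasurableSpace α] (μ : Measure α)
    (w : α → ℝ) (hw : Measurable w) (hwpos : ∀ᵐ x ∂μ, 0 < w x)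
    (g : α → ℝ) (hg : Measurable g)
    (hg2 : MemLp (fun x => g x / Real.sqrt (w x)) 2 μ)
    (hgne : ¬ ((fun x => g x / Real.sqrt (w x)) =ᵐ[μ] 0)) :
    MemLp (fun x => Real.sqrt (w x) * ((w x)⁻¹ * g x)) 2 μ ∧
    (∫ x, ((w x)⁻¹ * g x) * g x ∂μ
      = ((eLpNorm (fun x => g x / Real.sqrt (w x)) 2 μ).toReal) ^ 2) ∧
    (eLpNorm (fun x => Real.sqrt (w x) * ((w x)⁻¹ * g x)) 2 μ
      = eLpNorm (fun x => g x / Real.sqrt (w x)) 2 μ) ∧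
    IsGreatest
      {r : ℝ | ∃ q' : α → ℝ, Measurable q' ∧
        MemLp (fun x => Real.sqrt (w x) * q' x) 2 μ ∧
        eLpNorm (fun x => Real.sqrt (w x) * q' x) 2 μ ≠ 0 ∧
        r = (∫ x, q' x * g x ∂μ)
          / (eLpNorm (fun x => Real.sqrt (w x) * q' x) 2 μ).toReal}
      ((eLpNorm (fun x => g x / Real.sqrt (w x)) 2 μ).toReal) := by
  set f : α → ℝ := fun x => g x / Real.sqrt (w x) with hf
  set N : ℝ := (eLpNorm f 2 μ).toReal with hN
  -- a.e. key identities
  have hae : ∀ᵐ x ∂μ, Real.sqrt (w x) * ((w x)⁻¹ * g x) = f x := by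
    filter_upwards [hwpos] with x hx
    have hs : 0 < Real.sqrt (w x) := Real.sqrt_pos.2 hx
    have hw' : Real.sqrt (w x) * Real.sqrt (w x) = w x := Real.mul_self_sqrt hx.le
    show Real.sqrt (w x) * ((w x)⁻¹ * g x) = g x / Real.sqrt (w x)
    rw [eq_div_iff hs.ne']
    calc Real.sqrt (w x) * ((w x)⁻¹ * g x) * Real.sqrt (w x)
        = (Real.sqrt (w x) * Real.sqrt (w x)) * (w x)⁻¹ * g x := by ring
      _ = g x := by rw [hw', mul_inv_cancel₀ hx.ne', one_mul]
  have hmem : MemLp (fun x => Real.sqrt (w x) * ((w x)⁻¹ * g x)) 2 μ :=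
    (memLp_congr_ae hae).2 hg2
  have help : eLpNorm (fun x => Real.sqrt (w x) * ((w x)⁻¹ * g x)) 2 μ
      = eLpNorm f 2 μ := eLpNorm_congr_ae hae
  -- the Lp element for f
  have hFnorm : ‖hg2.toLp f‖ = N := by
    rw [Lp.norm_toLp]
  have hNne : N ≠ 0 := by
    intro h
    apply hgne
    have hfin : eLpNorm f 2 μ ≠ ⊤ := hg2.2.ne
    have : eLpNorm f 2 μ = 0 := by
      have := ENNReal.toReal_eq_zero_iff (eLpNorm f 2 μ)
      rcases this.1 h with h0 | h0
      · exact h0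
      · exact absurd h0 hfin
    exact (eLpNorm_eq_zero_iff hg2.1 (by norm_num)).1 this
  have hNpos : 0 < N := lt_of_le_of_ne ENNReal.toReal_nonneg (Ne.symm hNne)
  -- second claim
  have hint : ∫ x, ((w x)⁻¹ * g x) * g x ∂μ = N ^ 2 := by
    have h1 : ∫ x, ((w x)⁻¹ * g x) * g x ∂μ = ∫ x, f x * f x ∂μ := by
      refine integral_congr_ae ?_
      filter_upwards [hwpos] with x hx
      have hs : 0 < Real.sqrt (w x) := Real.sqrt_pos.2 hx
      have hw' : Real.sqrt (w x) * Real.sqrt (w x) = w x := Real.mul_self_sqrt hx.le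
      rw [hf]
      field_simp
      rw [Real.sq_sqrt hx.le]; ring
    rw [h1, aux_integral_mul_eq hg2 hg2, real_inner_self_eq_norm_sq, hFnorm]
  refine ⟨hmem, hint, help, ?_, ?_⟩
  · -- membership: take q' = w⁻¹ g
    refine ⟨fun x => (w x)⁻¹ * g x, (hw.inv).mul hg, hmem, ?_, ?_⟩
    · rw [help]
      intro h0
      exact hgne ((eLpNorm_eq_zero_iff hg2.1 (by norm_num)).1 h0)
    · rw [hint, help, ← hN, sq, mul_div_assoc, div_self hNne, mul_one]
  · -- upper bound
    rintro r ⟨q', hq'm, hq'mem, hq'ne, rfl⟩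
    set A := hq'mem.toLp _ with hA
    have hAnorm : ‖A‖ = (eLpNorm (fun x => Real.sqrt (w x) * q' x) 2 μ).toReal :=
      Lp.norm_toLp _ _
    have hApos : 0 < (eLpNorm (fun x => Real.sqrt (w x) * q' x) 2 μ).toReal := by
      refine lt_of_le_of_ne ENNReal.toReal_nonneg (Ne.symm ?_)
      intro h
      rcases (ENNReal.toReal_eq_zero_iff _).1 h with h0 | h0
      · exact hq'ne h0
      · exact absurd h0 hq'mem.2.ne
    have hint2 : ∫ x, q' x * g x ∂μ
        = ∫ x, (Real.sqrt (w x) * q' x) * f x ∂μ := by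
      refine integral_congr_ae ?_
      filter_upwards [hwpos] with x hx
      have hs : 0 < Real.sqrt (w x) := Real.sqrt_pos.2 hx
      field_simp [f]
      show q' x * g x = q' x * Real.sqrt (w x) * (g x / Real.sqrt (w x))
      rw [mul_assoc, mul_div_assoc', mul_comm (Real.sqrt (w x)) (g x), mul_div_cancel_right₀ _ hs.ne']
    have hCS : ∫ x, (Real.sqrt (w x) * q' x) * f x ∂μ ≤ ‖A‖ * ‖hg2.toLp f‖ := by
      rw [aux_integral_mul_eq hq'mem hg2]
      exact real_inner_le_norm _ _
    rw [div_le_iff₀ hApos, hint2]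
    calc ∫ x, (Real.sqrt (w x) * q' x) * f x ∂μ ≤ ‖A‖ * ‖hg2.toLp f‖ := hCS
      _ = N * (eLpNorm (fun x => Real.sqrt (w x) * q' x) 2 μ).toReal := by
          rw [hAnorm, hFnorm]; ring
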